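/- Let X = ∏_{i=1}^n X_i be a product of n finite intervals of integers, each of cardinality at least 2, let F = (f_1,…,f_n) be a map from X to itself, and let Y be a subinterval of X_1. Define F̃ = (f̃_1,…,f̃_n) : X → X by f̃_i = f_i for i > 1 and f̃_1(x) = min(Y) if f_1(x) < min(Y), f̃_1(x) = f_1(x) if f_1(x) ∈ Y, and f̃_1(x) = max(Y) if f_1(x) > max(Y). Then the number of attractors A of Γ(F) that contain a point x with x_1 ∈ Y is at most the total number of attractors of Γ(F̃). -/
import Mathlib


/-! Common definitions for discrete dynamical systems on products of
integer intervals, following Richard, "Positive circuits and maximal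
number of fixed points in discrete dynamical systems". -/

/-- The state space `X = ∏ i, [a i, b i]` as a subset of `Fin n → ℤ`. -/
def StateSpace {n : ℕ} (a b : Fin n → ℤ) : Set (Fin n → ℤ) :=
  {x | ∀ i, a i ≤ x i ∧ x i ≤ b i}

/-- `v` is a directional vector, i.e. `v ∈ {-1,1}^n`. -/
def IsDir {n : ℕ} (v : Fin n → ℤ) : Prop := ∀ i, v i = 1 ∨ v i = -1

/-- `(x, v) ∈ X'`: `x ∈ X`, `v ∈ {-1,1}^n` and `x + v ∈ X`. -/
def InX' {n : ℕ} (a b : Fin n → ℤ) (x v : Fin n → ℤ) : Prop :=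
  x ∈ StateSpace a b ∧ IsDir v ∧ (x + v) ∈ StateSpace a b

/-- Discrete Jacobian entry `f_ij(x,v) = (f_i(x + v_j e_j) - f_i(x)) / v_j`. -/
def jac {n : ℕ} (F : (Fin n → ℤ) → Fin n → ℤ) (x v : Fin n → ℤ) (i j : Fin n) : ℤ :=
  (F (Function.update x j (x j + v j)) i - F x i) / v j

/-- A signed edge `(j, s, i)`: initial vertex `j`, sign `s`, final vertex `i`. -/
abbrev SEdge (n : ℕ) := Fin n × ℤ × Fin n

/-- Edge set of the local interaction graph `𝐆_F(x,v)`: a positive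
(resp. negative) edge from `j` to `i` iff `f_ij(x,v) > 0` (resp. `< 0`). -/
def localGraph {n : ℕ} (F : (Fin n → ℤ) → Fin n → ℤ) (x v : Fin n → ℤ) :
    Set (SEdge n) :=
  {e | (e.2.1 = 1 ∧ 0 < jac F x v e.2.2 e.1) ∨ (e.2.1 = -1 ∧ jac F x v e.2.2 e.1 < 0)}

/-- `p` and `q` are on both sides of `t`. -/
def BothSides (p q t : ℚ) : Prop := (p < t ∧ t < q) ∨ (q < t ∧ t < p)

/-- Edge set of the local interaction graph with thresholds `G_F(x,v)`:
an edge `(j,s,i)` of `𝐆_F(x,v)` such that moreover `f_i(x)` and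
`f_i(x + v_j e_j)` are on both sides of the threshold `x_i + v_i / 2`. -/
def localGraphT {n : ℕ} (F : (Fin n → ℤ) → Fin n → ℤ) (x v : Fin n → ℤ) :
    Set (SEdge n) :=
  {e | e ∈ localGraph F x v ∧
    BothSides (F x e.2.2) (F (Function.update x e.1 (x e.1 + v e.1)) e.2.2)
      ((x e.2.2 : ℚ) + (v e.2.2 : ℚ) / 2)}

/-- `c` is an (elementary) circuit of the signed graph with edge set `E`:
a nonempty sequence of consecutive edges, closing up, whose initial
vertices are mutually distinct. -/
def IsCircuit {n : ℕ} (E : Set (SEdge n)) (c : List (SEdge n)) : Prop :=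
  c ≠ [] ∧ (∀ e ∈ c, e ∈ E) ∧
  (∀ (k : ℕ) (h : k + 1 < c.length),
    (c.get ⟨k, Nat.lt_of_succ_lt h⟩).2.2 = (c.get ⟨k + 1, h⟩).1) ∧
  (c.getLast?).map (fun e => e.2.2) = (c.head?).map (fun e => e.1) ∧
  (c.map (fun e => e.1)).Nodup

/-- A positive circuit: a circuit whose product of signs is positive. -/
def IsPosCircuit {n : ℕ} (E : Set (SEdge n)) (c : List (SEdge n)) : Prop :=
  IsCircuit E c ∧ 0 < (c.map (fun e => e.2.1)).prod

/-- The graph `E` has a positive circuit. -/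
def HasPosCircuit {n : ℕ} (E : Set (SEdge n)) : Prop := ∃ c, IsPosCircuit E c

/-- Vertex `i` belongs to some positive circuit of `E`. -/
def MemPosCircuit {n : ℕ} (E : Set (SEdge n)) (i : Fin n) : Prop :=
  ∃ c, IsPosCircuit E c ∧ i ∈ c.map (fun e => e.1)

/-- `I` is a positive feedback vertex set of `E`: every positive circuit
of `E` has at least one vertex in `I`. -/
def IsPFVS {n : ℕ} (E : Set (SEdge n)) (I : Finset (Fin n)) : Prop :=
  ∀ c, IsPosCircuit E c → ∃ i ∈ I, i ∈ c.map (fun e => e.1)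

/-- `T_i(G_F)`: the set of real numbers `t` such that `t = x_i + v_i/2` for
some `(x,v) ∈ X'` such that `i` belongs to a positive circuit of `G_F(x,v)`. -/
def Tset {n : ℕ} (a b : Fin n → ℤ) (F : (Fin n → ℤ) → Fin n → ℤ) (i : Fin n) : Set ℝ :=
  {t | ∃ x v, InX' a b x v ∧ t = (x i : ℝ) + (v i : ℝ) / 2 ∧
    MemPosCircuit (localGraphT F x v) i}

/-- Edge set of the global interaction graph `𝐆(F)` (without thresholds). -/
def globalGraph {n : ℕ} (a b : Fin n → ℤ) (F : (Fin n → ℤ) → Fin n → ℤ) :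
    Set (SEdge n) :=
  ⋃ (x : Fin n → ℤ) (v : Fin n → ℤ) (_ : InX' a b x v), localGraph F x v

/-- Edge set of the global interaction graph `G(F)` (with thresholds). -/
def globalGraphT {n : ℕ} (a b : Fin n → ℤ) (F : (Fin n → ℤ) → Fin n → ℤ) :
    Set (SEdge n) :=
  ⋃ (x : Fin n → ℤ) (v : Fin n → ℤ) (_ : InX' a b x v), localGraphT F x v

/-- Edge relation of the asynchronous state transition graph `Γ(F)`. -/
def Async {n : ℕ} (F : (Fin n → ℤ) → Fin n → ℤ) (x y : Fin n → ℤ) : Prop :=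
  ∃ i, F x i ≠ x i ∧ y = Function.update x i (x i + (F x i - x i).sign)

/-- A trap domain of `Γ(F)`: a nonempty subset of `X` closed under the
edges of `Γ(F)`. -/
def IsTrapDomain {n : ℕ} (a b : Fin n → ℤ) (F : (Fin n → ℤ) → Fin n → ℤ)
    (A : Set (Fin n → ℤ)) : Prop :=
  A.Nonempty ∧ A ⊆ StateSpace a b ∧ ∀ x ∈ A, ∀ y, Async F x y → y ∈ A

/-- An attractor of `Γ(F)`: a trap domain minimal for inclusion. -/
def IsAttractor {n : ℕ} (a b : Fin n → ℤ) (F : (Fin n → ℤ) → Fin n → ℤ)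
    (A : Set (Fin n → ℤ)) : Prop :=
  IsTrapDomain a b F A ∧ ∀ B, IsTrapDomain a b F B → B ⊆ A → B = A

/-- The map `F̃` obtained from `F` by clamping the first component into
the subinterval `Y = [c, d]` of `X_1`. -/
def clampFirst {n : ℕ} (i0 : Fin n) (c d : ℤ) (F : (Fin n → ℤ) → Fin n → ℤ) :
    (Fin n → ℤ) → Fin n → ℤ :=
  fun x i => if i = i0 then
      (if F x i0 < c then c else if d < F x i0 then d else F x i0)
    else F x i

lemma stateSpace_finite {n : ℕ} (a b : Fin n → ℤ) : (StateSpace a b).Finite := by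
  apply Set.Finite.subset (Set.Finite.pi (fun i : Fin n => Set.finite_Icc (a i) (b i)))
  intro x hx
  simp only [Set.mem_pi, Set.mem_univ, Set.mem_Icc, forall_true_left]
  exact fun i => ⟨(hx i).1, (hx i).2⟩

lemma exists_attractor_subset {n : ℕ} (a b : Fin n → ℤ) (G : (Fin n → ℤ) → Fin n → ℤ)
    (T : Set (Fin n → ℤ)) (hT : IsTrapDomain a b G T) :
    ∃ A, IsAttractor a b G A ∧ A ⊆ T := by
  have hfin : T.Finite := (stateSpace_finite a b).subset hT.2.1
  generalize hk : T.ncard = k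
  induction k using Nat.strong_induction_on generalizing T with
  | _ k ih =>
    by_cases h : ∀ B, IsTrapDomain a b G B → B ⊆ T → B = T
    · exact ⟨T, ⟨hT, h⟩, subset_rfl⟩
    · push_neg at h
      obtain ⟨B, hB, hBT, hne⟩ := h
      have hlt : B.ncard < k := hk ▸ Set.ncard_lt_ncard (ssubset_of_subset_of_ne hBT hne) hfin
      obtain ⟨A, hA, hAB⟩ := ih B.ncard hlt B hB (hfin.subset hBT) rfl
      exact ⟨A, hA, hAB.trans hBT⟩

lemma attractor_eq_of_inter {n : ℕ} (a b : Fin n → ℤ) (G : (Fin n → ℤ) → Fin n → ℤ)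
    {A B : Set (Fin n → ℤ)} (hA : IsAttractor a b G A)
    (hB : IsAttractor a b G B) (h : (A ∩ B).Nonempty) : A = B := by
  have hT : IsTrapDomain a b G (A ∩ B) :=
    ⟨h, Set.inter_subset_left.trans hA.1.2.1,
     fun x hx y hy => ⟨hA.1.2.2 x hx.1 y hy, hB.1.2.2 x hx.2 y hy⟩⟩
  rw [← hA.2 _ hT Set.inter_subset_left]
  exact hB.2 _ hT Set.inter_subset_right

lemma clamp_trap {n : ℕ} (a b : Fin n → ℤ) (i0 : Fin n) (c d : ℤ) (hcd : c ≤ d)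
    (F : (Fin n → ℤ) → Fin n → ℤ) {A : Set (Fin n → ℤ)}
    (hA : IsTrapDomain a b F A) (hx : ∃ x ∈ A, c ≤ x i0 ∧ x i0 ≤ d) :
    IsTrapDomain a b (clampFirst i0 c d F) (A ∩ {x | c ≤ x i0 ∧ x i0 ≤ d}) := by
  obtain ⟨x0, hx0A, hx0c, hx0d⟩ := hx
  refine ⟨⟨x0, hx0A, hx0c, hx0d⟩, Set.inter_subset_left.trans hA.2.1, ?_⟩
  rintro x ⟨hxA, hxc, hxd⟩ y ⟨i, hne, hy⟩
  by_cases hi : i = i0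
  · subst hi
    by_cases h1 : F x i < c
    · have hg : clampFirst i c d F x i = c := by simp [clampFirst, h1]
      rw [hg] at hne hy
      have hgt : c < x i := lt_of_le_of_ne hxc hne
      have hs : (c - x i).sign = -1 := Int.sign_eq_neg_one_iff_neg.mpr (by omega)
      have hs' : (F x i - x i).sign = -1 := Int.sign_eq_neg_one_iff_neg.mpr (by omega)
      have hyA : y ∈ A := hA.2.2 x hxA y ⟨i, by omega, by rw [hy, hs, hs']⟩
      refine ⟨hyA, ?_, ?_⟩ <;> rw [hy] <;> simp [hs] <;> omega
    · by_cases h2 : d < F x i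
      · have hg : clampFirst i c d F x i = d := by simp [clampFirst, h1, h2]
        rw [hg] at hne hy
        have hlt : x i < d := lt_of_le_of_ne hxd hne.symm
        have hs : (d - x i).sign = 1 := Int.sign_eq_one_iff_pos.mpr (by omega)
        have hs' : (F x i - x i).sign = 1 := Int.sign_eq_one_iff_pos.mpr (by omega)
        have hyA : y ∈ A := hA.2.2 x hxA y ⟨i, by omega, by rw [hy, hs, hs']⟩
        refine ⟨hyA, ?_, ?_⟩ <;> rw [hy] <;> simp [hs] <;> omega
      · have hg : clampFirst i c d F x i = F x i := by simp [clampFirst, h1, h2]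
        rw [hg] at hne hy
        have hyA : y ∈ A := hA.2.2 x hxA y ⟨i, hne, hy⟩
        rcases lt_or_gt_of_ne (sub_ne_zero.mpr hne) (b := 0) with hneg | hpos
        · have hs : (F x i - x i).sign = -1 := Int.sign_eq_neg_one_iff_neg.mpr hneg
          refine ⟨hyA, ?_, ?_⟩ <;> rw [hy] <;> simp [hs] <;> omega
        · have hs : (F x i - x i).sign = 1 := Int.sign_eq_one_iff_pos.mpr hpos
          refine ⟨hyA, ?_, ?_⟩ <;> rw [hy] <;> simp [hs] <;> omega
  · simp only [clampFirst, if_neg hi] at hne hy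
    have hyA : y ∈ A := hA.2.2 x hxA y ⟨i, hne, hy⟩
    have hyi0 : y i0 = x i0 := by rw [hy]; exact Function.update_of_ne (Ne.symm hi) _ _
    exact ⟨hyA, by rw [hyi0]; exact hxc, by rw [hyi0]; exact hxd⟩

/-- The number of attractors of `Γ(F)` meeting `{x | x_1 ∈ Y}` is at most
the number of attractors of `Γ(F̃)`. -/
theorem stmt17 {n : ℕ} (hn : 0 < n) (a b : Fin n → ℤ) (hab : ∀ i, a i + 1 ≤ b i)
    (F : (Fin n → ℤ) → Fin n → ℤ)
    (hF : ∀ x ∈ StateSpace a b, F x ∈ StateSpace a b)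
    (c d : ℤ) (hc : a ⟨0, hn⟩ ≤ c) (hcd : c ≤ d) (hd : d ≤ b ⟨0, hn⟩) :
    {A | IsAttractor a b F A ∧ ∃ x ∈ A, c ≤ x ⟨0, hn⟩ ∧ x ⟨0, hn⟩ ≤ d}.ncard
      ≤ {A | IsAttractor a b (clampFirst ⟨0, hn⟩ c d F) A}.ncard := by
  classical
  set i0 : Fin n := ⟨0, hn⟩ with hi0
  set G := clampFirst i0 c d F with hG
  set f : Set (Fin n → ℤ) → Set (Fin n → ℤ) :=
    fun A => if h : ∃ B, IsAttractor a b G B ∧ B ⊆ A then h.choose else ∅ with hfdef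
  have key : ∀ A, IsAttractor a b F A → (∃ x ∈ A, c ≤ x i0 ∧ x i0 ≤ d) →
      IsAttractor a b G (f A) ∧ f A ⊆ A := by
    intro A hAatt hmem
    have htrap := clamp_trap a b i0 c d hcd F hAatt.1 hmem
    obtain ⟨B, hB, hBsub⟩ := exists_attractor_subset a b G _ htrap
    have hex : ∃ B, IsAttractor a b G B ∧ B ⊆ A := ⟨B, hB, hBsub.trans Set.inter_subset_left⟩
    simp only [hfdef, dif_pos hex]
    exact hex.choose_spec
  have hmaps : ∀ A ∈ {A | IsAttractor a b F A ∧ ∃ x ∈ A, c ≤ x i0 ∧ x i0 ≤ d},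
      f A ∈ {A | IsAttractor a b G A} := by
    rintro A ⟨hAatt, hmem⟩
    exact (key A hAatt hmem).1
  have hinj : Set.InjOn f {A | IsAttractor a b F A ∧ ∃ x ∈ A, c ≤ x i0 ∧ x i0 ≤ d} := by
    rintro A ⟨hAatt, hmem⟩ A' ⟨hAatt', hmem'⟩ heq
    obtain ⟨hfA, hsubA⟩ := key A hAatt hmem
    obtain ⟨hfA', hsubA'⟩ := key A' hAatt' hmem'
    have hne : (A ∩ A').Nonempty := by
      obtain ⟨z, hz⟩ := hfA.1.1
      exact ⟨z, hsubA hz, hsubA' (heq ▸ hz)⟩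
    exact attractor_eq_of_inter a b F hAatt hAatt' hne
  have hfin : {A | IsAttractor a b G A}.Finite :=
    ((stateSpace_finite a b).finite_subsets).subset (fun A hA => hA.1.2.1)
  exact Set.ncard_le_ncard_of_injOn f hmaps hinj hfin
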